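/- Lemma (SC part of Lemma 1). For every well-formed execution (E, po, rf, co), under the SC instantiation — ppo = po, fences = ∅, hb = ppo ∪ fences ∪ rfe, prop = ppo ∪ fences ∪ rf ∪ fr — the four axioms SC-PER-LOCATION (acyclic(po-loc ∪ com)), NO-THIN-AIR (acyclic(hb)), OBSERVATION (irreflexive(fre ; prop ; hb*)) and PROPAGATION (acyclic(co ∪ prop)) all hold if and only if acyclic(po ∪ com), i.e. the execution is sequentially consistent in Lamport's sense (as characterized by acyclicity of program order together with communications). -/

import Mathlib

universe u v

/-- Relational composition `r1 ; r2`. -/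
def rcomp {E : Type u} (r1 r2 : E → E → Prop) : E → E → Prop :=
  fun x z => ∃ y, r1 x y ∧ r2 y z

/-- `irreflexive r` : no event is related to itself. -/
def irreflexiveRel {E : Type u} (r : E → E → Prop) : Prop := ¬ ∃ x, r x x

/-- `acyclic r` : the transitive closure of `r` is irreflexive. -/
def acyclicRel {E : Type u} (r : E → E → Prop) : Prop :=
  irreflexiveRel (Relation.TransGen r)

/-- A well-formed execution `(E, po, rf, co)` together with its event data. -/
structure WellFormedExec (E : Type u) (Loc : Type v) where
  /-- thread of an event -/
  proc : E → ℕ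
  /-- memory location of an event -/
  addr : E → Loc
  /-- set of write events -/
  W : Set E
  /-- set of read events -/
  R : Set E
  po : E → E → Prop
  rf : E → E → Prop
  co : E → E → Prop
  WR_disjoint : Disjoint W R
  po_trans : ∀ x y z, po x y → po y z → po x z
  po_irrefl : ∀ x, ¬ po x x
  po_wf : ∀ x y, po x y → x ≠ y ∧ proc x = proc y
  po_total : ∀ x y, x ≠ y → proc x = proc y → po x y ∨ po y x
  rf_wf : ∀ w r, rf w r → w ∈ W ∧ r ∈ R ∧ addr w = addr r
  rf_exists_unique : ∀ r ∈ R, ∃! w, rf w r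
  co_wf : ∀ w1 w2, co w1 w2 → w1 ∈ W ∧ w2 ∈ W ∧ w1 ≠ w2 ∧ addr w1 = addr w2
  co_trans : ∀ x y z, co x y → co y z → co x z
  co_irrefl : ∀ x, ¬ co x x
  co_total : ∀ w1 w2, w1 ∈ W → w2 ∈ W → w1 ≠ w2 → addr w1 = addr w2 → co w1 w2 ∨ co w2 w1

namespace WellFormedExec

variable {E : Type u} {Loc : Type v} (X : WellFormedExec E Loc)

/-- program order restricted to the same location -/
def poloc : E → E → Prop := fun x y => X.po x y ∧ X.addr x = X.addr y

/-- from-read -/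
def fr : E → E → Prop := fun r w1 => ∃ w0, X.rf w0 r ∧ X.co w0 w1

/-- communications -/
def com : E → E → Prop := fun x y => X.co x y ∨ X.rf x y ∨ X.fr x y

/-- external read-from -/
def rfe : E → E → Prop := fun w r => X.rf w r ∧ X.proc w ≠ X.proc r

/-- external from-read -/
def fre : E → E → Prop := fun r w => X.fr r w ∧ X.proc r ≠ X.proc w

end WellFormedExec

section SC

variable {E : Type u} {Loc : Type v}

/-- SC instantiation: preserved program order is all of `po`. -/
def scPpo (X : WellFormedExec E Loc) : E → E → Prop := X.po

/-- SC instantiation: no fences. -/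
def scFences (_X : WellFormedExec E Loc) : E → E → Prop := fun _ _ => False

/-- SC happens-before: `ppo ∪ fences ∪ rfe`. -/
def scHb (X : WellFormedExec E Loc) : E → E → Prop :=
  fun x y => scPpo X x y ∨ scFences X x y ∨ X.rfe x y

/-- SC propagation order: `ppo ∪ fences ∪ rf ∪ fr`. -/
def scProp (X : WellFormedExec E Loc) : E → E → Prop :=
  fun x y => scPpo X x y ∨ scFences X x y ∨ X.rf x y ∨ X.fr x y

/-- The SC part of Lemma 1: the four axioms under the SC instantiation hold
    iff `acyclic (po ∪ com)`, i.e. the execution is SC in Lamport's sense. -/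
theorem sc_model_equiv_lamport (X : WellFormedExec E Loc) :
    (acyclicRel (fun x y => X.poloc x y ∨ X.com x y) ∧
     acyclicRel (scHb X) ∧
     irreflexiveRel (rcomp X.fre (rcomp (scProp X) (Relation.ReflTransGen (scHb X)))) ∧
     acyclicRel (fun x y => X.co x y ∨ scProp X x y))
    ↔ acyclicRel (fun x y => X.po x y ∨ X.com x y) := by
  set S : E → E → Prop := fun x y => X.po x y ∨ X.com x y with hS
  have sub_acyc : ∀ (r : E → E → Prop), (∀ x y, r x y → S x y) → acyclicRel S → acyclicRel r := by
    intro r hr hA ⟨x, hx⟩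
    exact hA ⟨x, Relation.TransGen.mono hr _ _ hx⟩
  have hpropS : ∀ x y, scProp X x y → S x y := by
    rintro x y (h | h | h | h)
    · exact Or.inl h
    · exact h.elim
    · exact Or.inr (Or.inr (Or.inl h))
    · exact Or.inr (Or.inr (Or.inr h))
  have hhbS : ∀ x y, scHb X x y → S x y := by
    rintro x y (h | h | h)
    · exact Or.inl h
    · exact h.elim
    · exact Or.inr (Or.inr (Or.inl h.1))
  constructor
  · rintro ⟨_, _, _, h4⟩ ⟨x, hx⟩
    refine h4 ⟨x, Relation.TransGen.mono ?_ _ _ hx⟩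
    rintro a b (h | h)
    · exact Or.inr (Or.inl h)
    · change X.co a b ∨ X.rf a b ∨ X.fr a b at h
      rcases h with h | h | h
      · exact Or.inl h
      · exact Or.inr (Or.inr (Or.inr (Or.inl h)))
      · exact Or.inr (Or.inr (Or.inr (Or.inr h)))
  · intro hA
    refine ⟨sub_acyc _ ?_ hA, sub_acyc _ hhbS hA, ?_, sub_acyc _ ?_ hA⟩
    · rintro x y (⟨h, _⟩ | h)
      · exact Or.inl h
      · exact Or.inr h
    · rintro ⟨x, y, hfre, z, hprop, hrt⟩
      have h1 : Relation.TransGen S x z :=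
        Relation.TransGen.tail (Relation.TransGen.single
          (Or.inr (Or.inr (Or.inr hfre.1)))) (hpropS _ _ hprop)
      have h2 : Relation.ReflTransGen S z x := Relation.ReflTransGen.mono hhbS _ _ hrt
      exact hA ⟨x, h1.trans_left h2⟩
    · rintro x y (h | h)
      · exact Or.inr (Or.inl h)
      · exact hpropS _ _ h


end SC
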